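/- Define G(u) = 2u/π + 2(1−u)u·cot(πu) for u ∈ (0,1), extended by continuity to G(0) = G(1) = 2/π, and for real a < b define f_{a,b}(u) = (e^{−2πiau} − e^{−2πibu})/2. There is an absolute constant C > 0 such that for every real t ≥ 1 and all real numbers a < b, |Im ∫_0^t G(u/t) e^{−(2πu)²/2} f_{a,b}(u) du/u − (1/√(2π)) ∫_a^b e^{−x²/2} dx| ≤ C/t. -/

import Mathlib

open Complex

/-- Selberg's function `G(u) = 2u/π + 2(1-u)u cot(πu)` on `(0,1)`,
extended by continuity with `G(0) = G(1) = 2/π`. -/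
noncomputable def SelbergG (u : ℝ) : ℝ :=
  if u = 0 ∨ u = 1 then 2 / Real.pi
  else 2 * u / Real.pi + 2 * (1 - u) * u * Real.cot (Real.pi * u)

/-- `f_{a,b}(u) = (e^{-2πiau} - e^{-2πibu})/2`. -/
noncomputable def fab (a b u : ℝ) : ℂ :=
  (Complex.exp (-2 * Real.pi * a * u * Complex.I) -
    Complex.exp (-2 * Real.pi * b * u * Complex.I)) / 2

open MeasureTheory Set


lemma expI_abs_sub_one (θ : ℝ) : ‖Complex.exp (θ * Complex.I) - 1‖ ≤ |θ| := by
  have h : Complex.exp (θ * Complex.I) - 1 = (Real.cos θ - 1 : ℝ) + (Real.sin θ : ℝ) * Complex.I := by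
    rw [Complex.exp_mul_I, ← Complex.ofReal_cos, ← Complex.ofReal_sin]
    push_cast
    ring
  rw [h]
  have habs : ‖((Real.cos θ - 1 : ℝ) + (Real.sin θ : ℝ) * Complex.I : ℂ)‖
      = Real.sqrt ((Real.cos θ - 1)^2 + (Real.sin θ)^2) := by
    rw [Complex.norm_def, Complex.normSq_add_mul_I]
  rw [habs]
  have key : (Real.cos θ - 1)^2 + (Real.sin θ)^2 ≤ θ^2 := by
    have h1 : (Real.cos θ - 1)^2 + (Real.sin θ)^2 = 2 - 2 * Real.cos θ := by
      have := Real.sin_sq_add_cos_sq θ; nlinarith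
    rw [h1]
    have h2 := Real.one_sub_sq_div_two_le_cos (x := θ)
    nlinarith
  calc Real.sqrt ((Real.cos θ - 1)^2 + (Real.sin θ)^2) ≤ Real.sqrt (θ^2) :=
        Real.sqrt_le_sqrt key
    _ = |θ| := Real.sqrt_sq_eq_abs θ

lemma expI_abs_sub (X Y : ℝ) :
    ‖Complex.exp (X * Complex.I) - Complex.exp (Y * Complex.I)‖ ≤ |X - Y| := by
  have h : Complex.exp (X * Complex.I) - Complex.exp (Y * Complex.I)
      = Complex.exp (Y * Complex.I) * (Complex.exp ((X - Y : ℝ) * Complex.I) - 1) := by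
    rw [mul_sub, ← Complex.exp_add, mul_one]
    push_cast
    ring_nf
  rw [h, norm_mul, Complex.norm_exp_ofReal_mul_I, one_mul]
  exact expI_abs_sub_one _

lemma sin_sub_sin_abs_le (X Y : ℝ) : |Real.sin X - Real.sin Y| ≤ |X - Y| := by
  have h := expI_abs_sub X Y
  have him : |Real.sin X - Real.sin Y|
      ≤ ‖Complex.exp (X * Complex.I) - Complex.exp (Y * Complex.I)‖ := by
    have := Complex.abs_im_le_norm (Complex.exp ((X:ℝ) * Complex.I) - Complex.exp ((Y:ℝ) * Complex.I))
    simpa [Complex.sub_im, Complex.exp_ofReal_mul_I_im] using this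
  exact him.trans h


lemma wcot_le (w : ℝ) (h0 : 0 < w) (h2 : w ≤ Real.pi / 2) : w * Real.cot w ≤ 1 := by
  have hsin : 0 < Real.sin w :=
    Real.sin_pos_of_pos_of_lt_pi h0 (h2.trans_lt (by linarith [Real.pi_pos]))
  rw [Real.cot_eq_cos_div_sin, ← mul_div_assoc, div_le_one hsin]
  rcases eq_or_lt_of_le h2 with h | h
  · rw [h, Real.cos_pi_div_two]
    simpa using hsin.le
  · have hcos : 0 < Real.cos w := Real.cos_pos_of_mem_Ioo ⟨by linarith [Real.pi_pos], h⟩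
    have ht := Real.lt_tan h0 h
    rw [Real.tan_eq_sin_div_cos, lt_div_iff₀ hcos] at ht
    linarith

lemma le_wcot (w : ℝ) (h0 : 0 < w) (h2 : w ≤ Real.pi / 2) : 1 - w^2 ≤ w * Real.cot w := by
  have hsin : 0 < Real.sin w :=
    Real.sin_pos_of_pos_of_lt_pi h0 (h2.trans_lt (by linarith [Real.pi_pos]))
  have hcos : 0 ≤ Real.cos w := Real.cos_nonneg_of_mem_Icc ⟨by linarith [Real.pi_pos], h2⟩
  rw [Real.cot_eq_cos_div_sin, ← mul_div_assoc, le_div_iff₀ hsin]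
  rcases le_or_gt 1 w with h | h
  · nlinarith [mul_nonneg h0.le hcos, mul_nonneg (by nlinarith : (0:ℝ) ≤ w^2 - 1) hsin.le]
  · have hs := Real.sin_lt h0
    have hc := Real.one_sub_sq_div_two_le_cos (x := w)
    nlinarith

lemma cot_nonneg (w : ℝ) (h0 : 0 < w) (h2 : w ≤ Real.pi / 2) : 0 ≤ Real.cot w := by
  rw [Real.cot_eq_cos_div_sin]
  have hsin : 0 < Real.sin w :=
    Real.sin_pos_of_pos_of_lt_pi h0 (h2.trans_lt (by linarith [Real.pi_pos]))
  have hcos : 0 ≤ Real.cos w := Real.cos_nonneg_of_mem_Icc ⟨by linarith [Real.pi_pos], h2⟩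
  positivity

lemma G_bound (v : ℝ) (h0 : 0 < v) (h1 : v ≤ 1) :
    |Real.pi * SelbergG v - 2| ≤ 10 * v := by
  have hpi := Real.pi_pos
  rcases eq_or_lt_of_le h1 with rfl | h1'
  · rw [SelbergG, if_pos (Or.inr rfl)]
    rw [mul_div_cancel₀ _ (ne_of_gt hpi)]
    simp
  · rw [SelbergG, if_neg (by push_neg; constructor <;> intro h <;> [exact absurd h h0.ne'; exact absurd h h1'.ne])]
    rcases le_or_gt v (1/2) with hv | hv
    · -- small v : π G - 2 = 2(1-v)(w cot w - 1), w = π v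
      set w := Real.pi * v with hw
      have hw0 : 0 < w := by positivity
      have hw2 : w ≤ Real.pi / 2 := by rw [hw]; nlinarith
      have e1 : Real.pi * (2 * v / Real.pi + 2 * (1 - v) * v * Real.cot w) - 2
          = 2 * (1 - v) * (w * Real.cot w - 1) := by
        field_simp
        ring
      rw [e1, abs_mul]
      have hb : |w * Real.cot w - 1| ≤ w ^ 2 := by
        rw [abs_le]
        constructor
        · nlinarith [le_wcot w hw0 hw2]
        · nlinarith [wcot_le w hw0 hw2, sq_nonneg w]
      have h2v : |2 * (1 - v)| ≤ 2 := by rw [abs_le]; constructor <;> nlinarith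
      calc |2 * (1 - v)| * |w * Real.cot w - 1| ≤ 2 * w ^ 2 := by
            apply mul_le_mul h2v hb (abs_nonneg _) (by norm_num)
        _ ≤ 10 * v := by
            rw [hw]
            nlinarith [Real.pi_lt_d2, sq_nonneg v]
    · -- large v : use cot(πv) = -cot(π(1-v))
      have hcot : Real.cot (Real.pi * v) = - Real.cot (Real.pi * (1 - v)) := by
        have : Real.pi * v = Real.pi - Real.pi * (1 - v) := by ring
        rw [this, Real.cot_eq_cos_div_sin, Real.cot_eq_cos_div_sin,
          Real.sin_pi_sub, Real.cos_pi_sub, neg_div]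
      set s := 1 - v with hs
      have hs0 : 0 < s := by simp [hs]; linarith
      have hs2 : Real.pi * s ≤ Real.pi / 2 := by nlinarith
      have hws0 : 0 < Real.pi * s := by positivity
      have h1' : 0 ≤ (Real.pi * s) * Real.cot (Real.pi * s) := by
        exact mul_nonneg hws0.le (cot_nonneg _ hws0 hs2)
      have h2' : (Real.pi * s) * Real.cot (Real.pi * s) ≤ 1 := wcot_le _ hws0 hs2
      have e1 : Real.pi * (2 * v / Real.pi + 2 * (1 - v) * v * Real.cot (Real.pi * v)) - 2
          = -2 * s - 2 * v * ((Real.pi * s) * Real.cot (Real.pi * s)) := by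
        rw [hcot]
        field_simp
        ring
      rw [e1, abs_le]
      constructor <;> nlinarith

lemma gauss_integrable_cexp (t : ℝ) :
    Integrable (fun u : ℝ => Complex.exp (Complex.I * t * u) *
      Complex.exp (-(2 * Real.pi ^ 2 : ℂ) * u ^ 2)) := by
  have hb : (0:ℝ) < (2 * (Real.pi:ℂ) ^ 2).re := by
    simp [← Complex.ofReal_pow]
    positivity
  have h := integrable_cexp_quadratic (b := (2 * (Real.pi:ℂ) ^ 2)) hb (Complex.I * t) 0
  have heq : (fun x : ℝ => Complex.exp (-(2 * (Real.pi:ℂ) ^ 2) * x ^ 2 + Complex.I * t * x + 0))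
      = fun u : ℝ => Complex.exp (Complex.I * t * u) *
        Complex.exp (-(2 * Real.pi ^ 2 : ℂ) * u ^ 2) := by
    funext u
    rw [← Complex.exp_add]
    congr 1
    push_cast
    ring
  rwa [heq] at h

lemma gauss_cos (x : ℝ) :
    ∫ u : ℝ, Real.exp (-(2 * Real.pi ^ 2) * u ^ 2) * Real.cos (2 * Real.pi * x * u)
      = (1 / Real.sqrt (2 * Real.pi)) * Real.exp (-x ^ 2 / 2) := by
  have hπ := Real.pi_pos
  have hπc : (Real.pi : ℂ) ≠ 0 := by exact_mod_cast hπ.ne'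
  have hb : (0:ℝ) < (2 * (Real.pi:ℂ) ^ 2).re := by
    simp [← Complex.ofReal_pow]; positivity
  have key := fourierIntegral_gaussian (b := 2 * (Real.pi:ℂ) ^ 2) hb (2 * Real.pi * x)
  have hint : Integrable (fun u : ℝ => Complex.exp (Complex.I * (2 * Real.pi * x : ℂ) * u) *
      Complex.exp (-(2 * Real.pi ^ 2 : ℂ) * u ^ 2)) := by
    have := gauss_integrable_cexp (2 * Real.pi * x)
    refine this.congr (Filter.Eventually.of_forall fun u => ?_)
    push_cast
    ring_nf
  have hre := integral_re (μ := (volume : Measure ℝ)) hint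
  have hpt : ∀ u : ℝ, RCLike.re (Complex.exp (Complex.I * (2 * Real.pi * x : ℂ) * u) *
      Complex.exp (-(2 * Real.pi ^ 2 : ℂ) * u ^ 2))
      = Real.exp (-(2 * Real.pi ^ 2) * u ^ 2) * Real.cos (2 * Real.pi * x * u) := by
    intro u
    have h1 : Complex.exp (Complex.I * (2 * Real.pi * x : ℂ) * u)
        = Complex.exp ((2 * Real.pi * x * u : ℝ) * Complex.I) := by
      congr 1; push_cast; ring
    have h2 : Complex.exp (-(2 * Real.pi ^ 2 : ℂ) * u ^ 2)
        = ((Real.exp (-(2 * Real.pi ^ 2) * u ^ 2) : ℝ) : ℂ) := by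
      rw [Complex.ofReal_exp]; congr 1; push_cast; ring
    rw [h1, h2, RCLike.re_eq_complex_re, mul_comm, Complex.re_ofReal_mul,
      Complex.exp_ofReal_mul_I_re]
  simp_rw [hpt] at hre
  rw [hre, key]
  -- now compute the real part of the closed form
  have e1 : ((Real.pi : ℂ) / (2 * (Real.pi:ℂ) ^ 2)) = (((1 / (2 * Real.pi) : ℝ)) : ℂ) := by
    push_cast; field_simp
  have e2 : (((1 / (2 * Real.pi) : ℝ)) : ℂ) ^ (1/2 : ℂ)
      = (((1 / (2 * Real.pi)) ^ ((1:ℝ)/2) : ℝ) : ℂ) := by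
    rw [Complex.ofReal_cpow (by positivity)]
    norm_num
  have e3 : (1 / (2 * Real.pi)) ^ ((1:ℝ)/2) = 1 / Real.sqrt (2 * Real.pi) := by
    rw [← Real.sqrt_eq_rpow, one_div, one_div, Real.sqrt_inv]
  have e4 : (-(2 * (Real.pi:ℂ) * x) ^ 2 / (4 * (2 * (Real.pi:ℂ) ^ 2)))
      = ((- x ^ 2 / 2 : ℝ) : ℂ) := by
    push_cast; field_simp; ring
  rw [e1, e2, e3, e4, ← Complex.ofReal_exp, ← Complex.ofReal_mul,
    RCLike.re_eq_complex_re, Complex.ofReal_re]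

noncomputable def E (u : ℝ) : ℝ := Real.exp (-(2 * Real.pi ^ 2) * u ^ 2)

lemma E_cont : Continuous E := by unfold E; fun_prop

lemma E_pos (u : ℝ) : 0 < E u := Real.exp_pos _

lemma E_integrable : Integrable E := by
  have h : (0:ℝ) < 2 * Real.pi ^ 2 := by positivity
  exact (integrable_exp_neg_mul_sq h).congr (Filter.Eventually.of_forall fun x => by simp [E, neg_mul])

lemma E_total_le_one : ∫ u : ℝ, E u ≤ 1 := by
  have h : (0:ℝ) < 2 * Real.pi ^ 2 := by positivity
  have := integral_gaussian (2 * Real.pi ^ 2)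
  unfold E
  rw [this]
  have hle : Real.pi / (2 * Real.pi ^ 2) ≤ 1 := by
    rw [div_le_one (by positivity)]
    nlinarith [Real.pi_gt_three]
  calc Real.sqrt (Real.pi / (2 * Real.pi ^ 2)) ≤ Real.sqrt 1 := Real.sqrt_le_sqrt hle
    _ = 1 := Real.sqrt_one

lemma cos_integrable (x : ℝ) : Integrable (fun u : ℝ => E u * Real.cos (2 * Real.pi * x * u)) := by
  apply E_integrable.mono' (E_cont.mul (by fun_prop)).aestronglyMeasurable
  refine Filter.Eventually.of_forall fun u => ?_
  rw [Real.norm_eq_abs, Pi.mul_apply, abs_mul, abs_of_pos (E_pos u)]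
  calc E u * |Real.cos (2 * Real.pi * x * u)| ≤ E u * 1 :=
      mul_le_mul_of_nonneg_left (Real.abs_cos_le_one _) (E_pos u).le
    _ = E u := mul_one _



lemma gauss_cos_Ioi (x : ℝ) :
    ∫ u in Ioi (0:ℝ), E u * Real.cos (2 * Real.pi * x * u)
      = (1 / (2 * Real.sqrt (2 * Real.pi))) * Real.exp (-x ^ 2 / 2) := by
  set f := fun u : ℝ => E u * Real.cos (2 * Real.pi * x * u) with hf
  have hint := cos_integrable x
  have heven : ∀ u, f (-u) = f u := by
    intro u
    simp only [hf, E]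
    rw [show 2 * Real.pi * x * -u = -(2 * Real.pi * x * u) by ring, Real.cos_neg,
      show (-u)^2 = u^2 by ring]
  have hsplit : ∫ u, f u = (∫ u in Iic (0:ℝ), f u) + ∫ u in Ioi (0:ℝ), f u :=
    (intervalIntegral.integral_Iic_add_Ioi hint.integrableOn hint.integrableOn).symm
  have hIic : ∫ u in Iic (0:ℝ), f u = ∫ u in Ioi (0:ℝ), f u := by
    have h := integral_comp_neg_Ioi (0:ℝ) f
    simp_rw [heven, neg_zero] at h
    exact h.symm
  have : ∫ u, f u = 2 * ∫ u in Ioi (0:ℝ), f u := by rw [hsplit, hIic]; ring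
  have hval : ∫ u, f u = (1 / Real.sqrt (2 * Real.pi)) * Real.exp (-x ^ 2 / 2) := gauss_cos x
  have h2 : (0:ℝ) < Real.sqrt (2 * Real.pi) := Real.sqrt_pos.mpr (by positivity)
  rw [this] at hval
  field_simp at hval ⊢
  linarith

lemma F_eq (a b u : ℝ) (hu : u ≠ 0) :
    ∫ x in a..b, Real.cos (2 * Real.pi * x * u)
      = (Real.sin (2 * Real.pi * b * u) - Real.sin (2 * Real.pi * a * u)) / (2 * Real.pi * u) := by
  have hc : (2 * Real.pi * u) ≠ 0 := by
    have := Real.pi_pos; positivity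
  have key := intervalIntegral.mul_integral_comp_mul_left (a := a) (b := b)
    (c := 2 * Real.pi * u) (f := Real.cos)
  rw [integral_cos] at key
  have hcong : ∫ x in a..b, Real.cos (2 * Real.pi * x * u)
      = ∫ x in a..b, Real.cos (2 * Real.pi * u * x) := by
    apply intervalIntegral.integral_congr
    intro y _
    dsimp only
    rw [show 2 * Real.pi * y * u = 2 * Real.pi * u * y by ring]
  rw [hcong, eq_div_iff hc, mul_comm _ (2 * Real.pi * u), key,
    show 2 * Real.pi * u * b = 2 * Real.pi * b * u by ring,
    show 2 * Real.pi * u * a = 2 * Real.pi * a * u by ring]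

lemma fubini_cos (a b : ℝ) (hab : a ≤ b) :
    ∫ x in a..b, ∫ u in Ioi (0:ℝ), E u * Real.cos (2 * Real.pi * x * u)
      = ∫ u in Ioi (0:ℝ), ∫ x in a..b, E u * Real.cos (2 * Real.pi * x * u) := by
  rw [intervalIntegral.integral_of_le hab]
  simp_rw [intervalIntegral.integral_of_le hab]
  apply MeasureTheory.integral_integral_swap
  have h1 : Integrable (fun _ : ℝ => (1:ℝ)) (volume.restrict (Ioc a b)) :=
    integrableOn_const measure_Ioc_lt_top.ne
  have h2 : Integrable E (volume.restrict (Ioi (0:ℝ))) := E_integrable.integrableOn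
  have hd := h1.mul_prod h2
  apply hd.mono'
  · apply Continuous.aestronglyMeasurable
    fun_prop [E]
  · refine Filter.Eventually.of_forall fun p => ?_
    rw [Function.uncurry]
    simp only [one_mul]
    rw [Real.norm_eq_abs, abs_mul, abs_of_pos (E_pos p.2)]
    calc E p.2 * |Real.cos (2 * Real.pi * p.1 * p.2)| ≤ E p.2 * 1 :=
        mul_le_mul_of_nonneg_left (Real.abs_cos_le_one _) (E_pos p.2).le
      _ = E p.2 := mul_one _






lemma G_abs_le (v : ℝ) (h0 : 0 ≤ v) (h1 : v ≤ 1) : |SelbergG v| ≤ 4 := by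
  have hπ := Real.pi_gt_three
  rcases eq_or_lt_of_le h0 with rfl | h0'
  · rw [SelbergG, if_pos (Or.inl rfl), abs_le]
    have hp : (0:ℝ) < 2 / Real.pi := by positivity
    have hq : 2 / Real.pi ≤ 4 := by rw [div_le_iff₀ (by linarith)]; linarith
    constructor <;> linarith
  · have hb := abs_le.mp (G_bound v h0' h1)
    rw [abs_le]
    constructor <;> nlinarith [hb.1, hb.2]

lemma measurable_SelbergG : Measurable SelbergG := by
  apply Measurable.ite
  · have h : {x : ℝ | x = 0 ∨ x = 1} = ({0, 1} : Set ℝ) := by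
      ext x; simp
    rw [h]
    exact (Set.toFinite ({0,1} : Set ℝ)).measurableSet
  · exact measurable_const
  · have hcot : Measurable Real.cot := by
      have : Real.cot = fun x => Real.cos x / Real.sin x := funext fun x => Real.cot_eq_cos_div_sin x
      rw [this]
      exact Real.measurable_cos.div Real.measurable_sin
    fun_prop
  
lemma fab_rewrite (a b u : ℝ) : fab a b u =
    (Complex.exp ((-(2 * Real.pi * a * u) : ℝ) * Complex.I) -
     Complex.exp ((-(2 * Real.pi * b * u) : ℝ) * Complex.I)) / 2 := by
  rw [fab]
  congr 2 <;> · congr 1; push_cast; ring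

lemma fab_im (a b u : ℝ) : (fab a b u).im
    = (Real.sin (2 * Real.pi * b * u) - Real.sin (2 * Real.pi * a * u)) / 2 := by
  rw [fab_rewrite]
  rw [show ((2:ℂ)) = ((2:ℝ):ℂ) from by norm_num]
  rw [Complex.div_ofReal_im, Complex.sub_im, Complex.exp_ofReal_mul_I_im,
    Complex.exp_ofReal_mul_I_im, Real.sin_neg, Real.sin_neg]
  ring

lemma fab_abs_le_one (a b u : ℝ) : ‖fab a b u‖ ≤ 1 := by
  rw [fab_rewrite, norm_div]
  have h1 := Complex.norm_exp_ofReal_mul_I (-(2 * Real.pi * a * u))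
  have h2 := Complex.norm_exp_ofReal_mul_I (-(2 * Real.pi * b * u))
  have h3 : ‖Complex.exp ((-(2 * Real.pi * a * u) : ℝ) * Complex.I) -
      Complex.exp ((-(2 * Real.pi * b * u) : ℝ) * Complex.I)‖ ≤ 2 := by
    have hn := norm_sub_le (Complex.exp ((-(2 * Real.pi * a * u) : ℝ) * Complex.I))
      (Complex.exp ((-(2 * Real.pi * b * u) : ℝ) * Complex.I))
    rw [h1, h2] at hn
    linarith
  have h4 : ‖(2:ℂ)‖ = 2 := by norm_num
  rw [h4]
  linarith

lemma fab_abs_le (a b u : ℝ) : ‖fab a b u‖ ≤ Real.pi * |b - a| * |u| := by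
  rw [fab_rewrite, norm_div]
  have h := expI_abs_sub (-(2 * Real.pi * a * u)) (-(2 * Real.pi * b * u))
  have he : |(-(2 * Real.pi * a * u)) - (-(2 * Real.pi * b * u))| = 2 * Real.pi * |b - a| * |u| := by
    rw [show (-(2 * Real.pi * a * u)) - (-(2 * Real.pi * b * u)) = 2*Real.pi*((b-a)*u) by ring,
      abs_mul, abs_of_pos (by positivity : (0:ℝ) < 2*Real.pi), abs_mul]
    ring
  rw [he] at h
  have : ‖(2:ℂ)‖ = 2 := by norm_num
  rw [this]
  linarith

lemma integrand_eq_ofReal_mul (a b t u : ℝ) :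
    (SelbergG (u / t) : ℂ) * Real.exp (-(2 * Real.pi * u) ^ 2 / 2) * fab a b u / (u : ℂ)
      = ((SelbergG (u / t) * E u / u : ℝ) : ℂ) * fab a b u := by
  have he : ((Real.exp (-(2 * Real.pi * u) ^ 2 / 2) : ℝ) : ℂ) = ((E u : ℝ) : ℂ) := by
    norm_cast
    rw [E]
    congr 1
    ring
  rw [he]
  push_cast
  ring

lemma integrand_im (a b t u : ℝ) :
    ((SelbergG (u / t) : ℂ) * Real.exp (-(2 * Real.pi * u) ^ 2 / 2) * fab a b u / (u : ℂ)).im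
      = SelbergG (u / t) * E u / u *
        ((Real.sin (2 * Real.pi * b * u) - Real.sin (2 * Real.pi * a * u)) / 2) := by
  rw [integrand_eq_ofReal_mul, Complex.im_ofReal_mul, fab_im]

/-- Lemma 4.2: uniformly in `a < b`,
`Im ∫_0^t G(u/t) e^{-(2πu)²/2} f_{a,b}(u) du/u = (1/√(2π)) ∫_a^b e^{-x²/2} dx + O(1/t)`. -/
theorem smoothed_gaussian_integral :
    ∃ C : ℝ, 0 < C ∧
      ∀ (t : ℝ), 1 ≤ t → ∀ (a b : ℝ), a < b →
        |(∫ u in (0 : ℝ)..t,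
              (SelbergG (u / t) : ℂ) * Real.exp (-(2 * Real.pi * u) ^ 2 / 2) *
                fab a b u / (u : ℂ)).im -
            (1 / Real.sqrt (2 * Real.pi)) * ∫ x in a..b, Real.exp (-x ^ 2 / 2)|
          ≤ C / t := by
  refine ⟨4, by norm_num, fun t ht a b hab => ?_⟩
  have hπ := Real.pi_pos
  have hπ3 := Real.pi_gt_three
  have ht0 : (0:ℝ) < t := by linarith
  set S : ℝ → ℝ := fun u =>
    (Real.sin (2 * Real.pi * b * u) - Real.sin (2 * Real.pi * a * u)) / 2 with hSdef
  set φ : ℝ → ℝ := fun u => SelbergG (u / t) * E u / u * S u with hφdef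
  set ψ : ℝ → ℝ := fun u => 2 / Real.pi * (E u / u) * S u with hψdef
  -- bounds on S
  have hS1 : ∀ u, |S u| ≤ 1 := by
    intro u
    rw [hSdef]
    simp only
    rw [abs_div, _root_.abs_two, div_le_one (by norm_num)]
    calc |Real.sin (2 * Real.pi * b * u) - Real.sin (2 * Real.pi * a * u)|
        ≤ |Real.sin (2 * Real.pi * b * u)| + |Real.sin (2 * Real.pi * a * u)| := abs_sub _ _
      _ ≤ 2 := by linarith [Real.abs_sin_le_one (2 * Real.pi * b * u),
          Real.abs_sin_le_one (2 * Real.pi * a * u)]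
  have hS2 : ∀ u, 0 ≤ u → |S u| ≤ Real.pi * (b - a) * u := by
    intro u hu
    rw [hSdef]
    simp only
    rw [abs_div, _root_.abs_two, div_le_iff₀ (by norm_num)]
    calc |Real.sin (2 * Real.pi * b * u) - Real.sin (2 * Real.pi * a * u)|
        ≤ |2 * Real.pi * b * u - 2 * Real.pi * a * u| := sin_sub_sin_abs_le _ _
      _ = 2 * Real.pi * (b - a) * u := by
          rw [show 2 * Real.pi * b * u - 2 * Real.pi * a * u = 2 * Real.pi * ((b-a) * u) by ring,
            _root_.abs_mul, _root_.abs_of_pos (by positivity : (0:ℝ) < 2 * Real.pi),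
            _root_.abs_mul, _root_.abs_of_nonneg (by linarith : (0:ℝ) ≤ b - a),
            _root_.abs_of_nonneg hu]
          ring
      _ = Real.pi * (b - a) * u * 2 := by ring
  -- base product bound
  have hbase : ∀ u, 0 < u → E u / u * |S u| ≤ Real.pi * (b - a) * E u := by
    intro u hu0
    rw [div_mul_eq_mul_div, div_le_iff₀ hu0]
    calc E u * |S u| ≤ E u * (Real.pi * (b - a) * u) :=
        mul_le_mul_of_nonneg_left (hS2 u hu0.le) (E_pos u).le
      _ = Real.pi * (b - a) * E u * u := by ring
  have hbase1 : ∀ u, 0 < u → E u / u * |S u| ≤ E u / u := by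
    intro u hu0
    calc E u / u * |S u| ≤ E u / u * 1 :=
        mul_le_mul_of_nonneg_left (hS1 u) (div_nonneg (E_pos u).le hu0.le)
      _ = E u / u := mul_one _
  -- measurability
  have hGm : Measurable fun u : ℝ => SelbergG (u / t) :=
    measurable_SelbergG.comp (measurable_id.div_const t)
  have hSm : Measurable S := by
    rw [hSdef]; fun_prop
  have hφm : Measurable φ := by
    rw [hφdef]
    exact (((hGm.mul E_cont.measurable).div measurable_id).mul hSm)
  have hψm : Measurable ψ := by
    rw [hψdef]
    exact ((measurable_const.mul (E_cont.measurable.div measurable_id)).mul hSm)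
  -- abs decompositions
  have hφabs : ∀ u, 0 < u → |φ u| = |SelbergG (u / t)| * (E u / u * |S u|) := by
    intro u hu0
    rw [hφdef]
    simp only
    rw [_root_.abs_mul, abs_div, _root_.abs_mul, _root_.abs_of_pos (E_pos u),
      _root_.abs_of_pos hu0]
    ring
  have hψabs : ∀ u, 0 < u → |ψ u| = 2 / Real.pi * (E u / u * |S u|) := by
    intro u hu0
    rw [hψdef]
    simp only
    rw [_root_.abs_mul, _root_.abs_of_pos
      (mul_pos (by positivity : (0:ℝ) < 2 / Real.pi) (div_pos (E_pos u) hu0))]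
    ring
  have hGle : ∀ u, 0 < u → u ≤ t → |SelbergG (u / t)| ≤ 4 := fun u hu0 hut =>
    G_abs_le _ (by positivity) ((div_le_one ht0).mpr hut)
  -- integrability
  have hφint : IntegrableOn φ (Ioc 0 t) := by
    apply Integrable.mono' ((E_integrable.const_mul (4 * (Real.pi * (b - a)))).integrableOn)
      hφm.aestronglyMeasurable
    rw [ae_restrict_iff' measurableSet_Ioc]
    refine Filter.Eventually.of_forall fun u hu => ?_
    have hu0 : 0 < u := hu.1
    rw [Real.norm_eq_abs, hφabs u hu0]
    calc |SelbergG (u / t)| * (E u / u * |S u|)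
        ≤ 4 * (Real.pi * (b - a) * E u) :=
          mul_le_mul (hGle u hu0 hu.2) (hbase u hu0)
            (mul_nonneg (div_nonneg (E_pos u).le hu0.le) (abs_nonneg _)) (by norm_num)
      _ = 4 * (Real.pi * (b - a)) * E u := by ring
  have hψboundE : ∀ u, 0 < u → |ψ u| ≤ 2 * (b - a) * E u := by
    intro u hu0
    rw [hψabs u hu0]
    calc 2 / Real.pi * (E u / u * |S u|)
        ≤ 2 / Real.pi * (Real.pi * (b - a) * E u) :=
          mul_le_mul_of_nonneg_left (hbase u hu0) (by positivity)
      _ = 2 * (b - a) * E u := by field_simp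
  have hψint1 : IntegrableOn ψ (Ioc 0 t) := by
    apply Integrable.mono' ((E_integrable.const_mul (2 * (b - a))).integrableOn)
      hψm.aestronglyMeasurable
    rw [ae_restrict_iff' measurableSet_Ioc]
    exact Filter.Eventually.of_forall fun u hu => by
      rw [Real.norm_eq_abs]; exact hψboundE u hu.1
  have hψint2 : IntegrableOn ψ (Ioi t) := by
    apply Integrable.mono' ((E_integrable.const_mul (2 * (b - a))).integrableOn)
      hψm.aestronglyMeasurable
    rw [ae_restrict_iff' measurableSet_Ioi]
    exact Filter.Eventually.of_forall fun u hu => by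
      rw [Real.norm_eq_abs]; exact hψboundE u (ht0.trans hu)
  -- complex integrand integrable
  have hfabm : Measurable (fab a b) := by
    unfold fab
    fun_prop
  have hzint : IntegrableOn (fun u : ℝ =>
      (SelbergG (u / t) : ℂ) * Real.exp (-(2 * Real.pi * u) ^ 2 / 2) * fab a b u / (u : ℂ))
      (Ioc 0 t) := by
    have hmeq : (fun u : ℝ =>
        (SelbergG (u / t) : ℂ) * Real.exp (-(2 * Real.pi * u) ^ 2 / 2) * fab a b u / (u : ℂ))
        = fun u => ((SelbergG (u / t) * E u / u : ℝ) : ℂ) * fab a b u :=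
      funext (integrand_eq_ofReal_mul a b t)
    rw [hmeq]
    apply Integrable.mono' ((E_integrable.const_mul (4 * (Real.pi * (b - a)))).integrableOn)
    · exact ((Complex.measurable_ofReal.comp
        (((hGm.mul E_cont.measurable).div measurable_id))).mul hfabm).aestronglyMeasurable
    · rw [ae_restrict_iff' measurableSet_Ioc]
      refine Filter.Eventually.of_forall fun u hu => ?_
      have hu0 : 0 < u := hu.1
      rw [norm_mul, Complex.norm_real, Real.norm_eq_abs]
      have h1 : |SelbergG (u / t) * E u / u| = |SelbergG (u / t)| * (E u / u) := by
        rw [abs_div, _root_.abs_mul, _root_.abs_of_pos (E_pos u), _root_.abs_of_pos hu0]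
        ring
      rw [h1]
      have h2 : E u / u * ‖fab a b u‖ ≤ Real.pi * (b - a) * E u := by
        rw [div_mul_eq_mul_div, div_le_iff₀ hu0]
        calc E u * ‖fab a b u‖
            ≤ E u * (Real.pi * |b - a| * |u|) :=
              mul_le_mul_of_nonneg_left (fab_abs_le a b u) (E_pos u).le
          _ = Real.pi * (b - a) * E u * u := by
              rw [_root_.abs_of_nonneg (by linarith : (0:ℝ) ≤ b - a), _root_.abs_of_pos hu0]
              ring
      calc |SelbergG (u / t)| * (E u / u) * ‖fab a b u‖
          = |SelbergG (u / t)| * (E u / u * ‖fab a b u‖) := by ring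
        _ ≤ 4 * (Real.pi * (b - a) * E u) :=
            mul_le_mul (hGle u hu0 hu.2) h2
              (mul_nonneg (div_nonneg (E_pos u).le hu0.le) (norm_nonneg _)) (by norm_num)
        _ = 4 * (Real.pi * (b - a)) * E u := by ring
  -- A = ∫_{Ioc} φ
  have hA : (∫ u in (0:ℝ)..t,
      (SelbergG (u / t) : ℂ) * Real.exp (-(2 * Real.pi * u) ^ 2 / 2) * fab a b u / (u : ℂ)).im
      = ∫ u in Ioc 0 t, φ u := by
    rw [intervalIntegral.integral_of_le ht0.le]
    have him := integral_im (μ := volume.restrict (Ioc 0 t)) hzint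
    simp only [RCLike.im_eq_complex_im] at him
    rw [← him]
    apply setIntegral_congr_fun measurableSet_Ioc
    intro u _
    simp only
    rw [integrand_im a b t u, hφdef, hSdef]
  -- M = ∫_{Ioi 0} ψ
  have hM : (1 / Real.sqrt (2 * Real.pi)) * ∫ x in a..b, Real.exp (-x ^ 2 / 2)
      = ∫ u in Ioi (0:ℝ), ψ u := by
    have h1 : ∀ x : ℝ, (1 / Real.sqrt (2 * Real.pi)) * Real.exp (-x ^ 2 / 2)
        = 2 * ∫ u in Ioi (0:ℝ), E u * Real.cos (2 * Real.pi * x * u) := by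
      intro x
      rw [gauss_cos_Ioi x]
      have h2 : (0:ℝ) < Real.sqrt (2 * Real.pi) := Real.sqrt_pos.mpr (by positivity)
      field_simp
    calc (1 / Real.sqrt (2 * Real.pi)) * ∫ x in a..b, Real.exp (-x ^ 2 / 2)
        = ∫ x in a..b, (1 / Real.sqrt (2 * Real.pi)) * Real.exp (-x ^ 2 / 2) :=
          (intervalIntegral.integral_const_mul _ _).symm
      _ = ∫ x in a..b, 2 * ∫ u in Ioi (0:ℝ), E u * Real.cos (2 * Real.pi * x * u) :=
          intervalIntegral.integral_congr fun x _ => h1 x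
      _ = 2 * ∫ x in a..b, ∫ u in Ioi (0:ℝ), E u * Real.cos (2 * Real.pi * x * u) :=
          intervalIntegral.integral_const_mul _ _
      _ = 2 * ∫ u in Ioi (0:ℝ), ∫ x in a..b, E u * Real.cos (2 * Real.pi * x * u) := by
          rw [fubini_cos a b hab.le]
      _ = ∫ u in Ioi (0:ℝ), 2 * ∫ x in a..b, E u * Real.cos (2 * Real.pi * x * u) :=
          (integral_const_mul 2 _).symm
      _ = ∫ u in Ioi (0:ℝ), ψ u := by
          apply setIntegral_congr_fun measurableSet_Ioi
          intro u hu
          have hu0 : (0:ℝ) < u := hu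
          simp only
          rw [intervalIntegral.integral_const_mul, F_eq a b u hu0.ne', hψdef, hSdef]
          simp only
          field_simp
  -- splitting
  have hsplit : ∫ u in Ioi (0:ℝ), ψ u = (∫ u in Ioc 0 t, ψ u) + ∫ u in Ioi t, ψ u := by
    rw [← setIntegral_union Ioc_disjoint_Ioi_same measurableSet_Ioi hψint1 hψint2,
      Ioc_union_Ioi_eq_Ioi ht0.le]
  -- error bounds
  have hEIoc : ∫ u in Ioc 0 t, E u ≤ 1 :=
    le_trans (setIntegral_le_integral E_integrable
      (Filter.Eventually.of_forall fun u => (E_pos u).le)) E_total_le_one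
  have hEIoi : ∫ u in Ioi t, E u ≤ 1 :=
    le_trans (setIntegral_le_integral E_integrable
      (Filter.Eventually.of_forall fun u => (E_pos u).le)) E_total_le_one
  have hb1 : |∫ u in Ioc 0 t, (φ u - ψ u)| ≤ 10 / (Real.pi * t) := by
    have hpt : ∀ u ∈ Ioc (0:ℝ) t, |φ u - ψ u| ≤ 10 / (Real.pi * t) * E u := by
      intro u hu
      have hu0 : 0 < u := hu.1
      have h1 : φ u - ψ u = (SelbergG (u / t) - 2 / Real.pi) * (E u / u * S u) := by
        rw [hφdef, hψdef]; simp only; ring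
      have h1' : |φ u - ψ u| = |SelbergG (u / t) - 2 / Real.pi| * (E u / u * |S u|) := by
        rw [h1, _root_.abs_mul, _root_.abs_mul, abs_div,
          _root_.abs_of_pos (E_pos u), _root_.abs_of_pos hu0]
      rw [h1']
      have hG : |SelbergG (u / t) - 2 / Real.pi| ≤ 10 * u / (Real.pi * t) := by
        have hgb := G_bound (u / t) (div_pos hu0 ht0) ((div_le_one ht0).mpr hu.2)
        have h2 : SelbergG (u / t) - 2 / Real.pi
            = (Real.pi * SelbergG (u / t) - 2) / Real.pi := by field_simp
        rw [h2, abs_div, _root_.abs_of_pos hπ]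
        calc |Real.pi * SelbergG (u / t) - 2| / Real.pi
            ≤ 10 * (u / t) / Real.pi := (div_le_div_iff_of_pos_right hπ).mpr hgb
          _ = 10 * u / (Real.pi * t) := by field_simp
      calc |SelbergG (u / t) - 2 / Real.pi| * (E u / u * |S u|)
          ≤ (10 * u / (Real.pi * t)) * (E u / u) :=
            mul_le_mul hG (hbase1 u hu0)
              (mul_nonneg (div_nonneg (E_pos u).le hu0.le) (abs_nonneg _))
              (div_nonneg (by nlinarith : (0:ℝ) ≤ 10 * u) (by positivity))
        _ = 10 / (Real.pi * t) * E u := by field_simp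
    calc |∫ u in Ioc 0 t, (φ u - ψ u)| ≤ ∫ u in Ioc 0 t, |φ u - ψ u| := by
          have hh := norm_integral_le_integral_norm (μ := volume.restrict (Ioc 0 t))
            (fun u => φ u - ψ u)
          simpa [Real.norm_eq_abs] using hh
      _ ≤ ∫ u in Ioc 0 t, 10 / (Real.pi * t) * E u :=
          setIntegral_mono_on (hφint.sub hψint1).abs
            ((E_integrable.const_mul _).integrableOn) measurableSet_Ioc hpt
      _ = 10 / (Real.pi * t) * ∫ u in Ioc 0 t, E u := integral_const_mul _ _
      _ ≤ 10 / (Real.pi * t) * 1 := mul_le_mul_of_nonneg_left hEIoc (by positivity)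
      _ = 10 / (Real.pi * t) := mul_one _
  have hb2 : |∫ u in Ioi t, ψ u| ≤ 2 / (Real.pi * t) := by
    have hpt : ∀ u ∈ Ioi t, |ψ u| ≤ 2 / (Real.pi * t) * E u := by
      intro u hu
      have hu0 : 0 < u := ht0.trans hu
      rw [hψabs u hu0]
      calc 2 / Real.pi * (E u / u * |S u|)
          ≤ 2 / Real.pi * (E u / u) :=
            mul_le_mul_of_nonneg_left (hbase1 u hu0) (by positivity : (0:ℝ) ≤ 2 / Real.pi)
        _ ≤ 2 / Real.pi * (E u / t) :=
            mul_le_mul_of_nonneg_left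
              (div_le_div_of_nonneg_left (E_pos u).le ht0 (le_of_lt hu)) (by positivity)
        _ = 2 / (Real.pi * t) * E u := by field_simp
    calc |∫ u in Ioi t, ψ u| ≤ ∫ u in Ioi t, |ψ u| := by
          have hh := norm_integral_le_integral_norm (μ := volume.restrict (Ioi t)) ψ
          simpa [Real.norm_eq_abs] using hh
      _ ≤ ∫ u in Ioi t, 2 / (Real.pi * t) * E u :=
          setIntegral_mono_on hψint2.abs
            ((E_integrable.const_mul _).integrableOn) measurableSet_Ioi hpt
      _ = 2 / (Real.pi * t) * ∫ u in Ioi t, E u := integral_const_mul _ _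
      _ ≤ 2 / (Real.pi * t) * 1 := mul_le_mul_of_nonneg_left hEIoi (by positivity)
      _ = 2 / (Real.pi * t) := mul_one _
  -- final assembly
  rw [hA, hM, hsplit]
  have hcomb : (∫ u in Ioc 0 t, φ u) - ((∫ u in Ioc 0 t, ψ u) + ∫ u in Ioi t, ψ u)
      = (∫ u in Ioc 0 t, (φ u - ψ u)) - ∫ u in Ioi t, ψ u := by
    rw [integral_sub hφint hψint1]
    ring
  rw [hcomb]
  calc |(∫ u in Ioc 0 t, (φ u - ψ u)) - ∫ u in Ioi t, ψ u|
      ≤ |∫ u in Ioc 0 t, (φ u - ψ u)| + |∫ u in Ioi t, ψ u| := abs_sub _ _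
    _ ≤ 10 / (Real.pi * t) + 2 / (Real.pi * t) := add_le_add hb1 hb2
    _ = 12 / (Real.pi * t) := by ring
    _ ≤ 4 / t := by
        rw [div_le_div_iff₀ (by positivity) ht0]
        nlinarith
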